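/- Let W be a Banach space, V ⊂ W an open set, F ∈ C²(V, ℝ) with F̂ := inf_{v∈V} F(v) finite. Suppose there exist τ₀, a₀, C₀ ∈ (0,∞) and a minimizing sequence (v_k) ⊂ V such that for all τ ∈ (−τ₀, τ₀), all φ in the closed unit ball of W, and all k: v_k + τφ ∈ V and ‖F''(v_k + τφ)‖ ≤ C₀/(1 − |τ| a₀)². Then ‖F'(v_k)‖_{W'} → 0 as k → ∞. -/

import Mathlib

open Set Filter Topology

/-- If a real functional is `≤ c` on the unit ball, its norm is `≤ c`. -/
lemma opnorm_le_of_unit {W : Type*} [NormedAddCommGroup W] [NormedSpace ℝ W]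
    (L : W →L[ℝ] ℝ) (c : ℝ) (hc : 0 ≤ c) (h : ∀ φ : W, ‖φ‖ ≤ 1 → L φ ≤ c) : ‖L‖ ≤ c := by
  refine L.opNorm_le_bound hc fun x => ?_
  rcases eq_or_ne x 0 with rfl | hx
  · simp [mul_nonneg hc]
  · set φ : W := ‖x‖⁻¹ • x with hφ
    have hnx : (0:ℝ) < ‖x‖ := norm_pos_iff.2 hx
    have hφ1 : ‖φ‖ ≤ 1 := by
      rw [hφ, norm_smul, norm_inv, norm_norm, inv_mul_cancel₀ hnx.ne']
    have h1 : L φ ≤ c := h φ hφ1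
    have h2 : -L φ ≤ c := by simpa using h (-φ) (by simpa using hφ1)
    have habs : |L φ| ≤ c := abs_le.2 ⟨by linarith, h1⟩
    have hxφ : x = ‖x‖ • φ := by rw [hφ, smul_smul, mul_inv_cancel₀ hnx.ne', one_smul]
    calc ‖L x‖ = |L (‖x‖ • φ)| := by rw [← hxφ]; rfl
    _ = ‖x‖ * |L φ| := by rw [map_smul, smul_eq_mul, abs_mul, abs_of_pos hnx]
    _ ≤ ‖x‖ * c := by exact mul_le_mul_of_nonneg_left habs hnx.le
    _ = c * ‖x‖ := mul_comm _ _

set_option maxHeartbeats 1600000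

/-- Ekeland-type principle for C² functionals (Theorem A.1 / `thm:Ek`). -/
theorem stmt_2 {W : Type*} [NormedAddCommGroup W] [NormedSpace ℝ W]
    (V : Set W) (hV : IsOpen V) (F : W → ℝ) (hF : ContDiffOn ℝ 2 F V)
    (Fhat : ℝ) (hglb : IsGLB (F '' V) Fhat)
    (τ₀ a₀ C₀ : ℝ) (hτ₀ : 0 < τ₀) (ha₀ : 0 < a₀) (hC₀ : 0 < C₀)
    (v : ℕ → W) (hvV : ∀ k, v k ∈ V)
    (hmin : Tendsto (fun k => F (v k)) atTop (𝓝 Fhat))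
    (hmem : ∀ τ : ℝ, |τ| < τ₀ → ∀ φ : W, ‖φ‖ ≤ 1 → ∀ k, v k + τ • φ ∈ V)
    (hbd : ∀ τ : ℝ, |τ| < τ₀ → ∀ φ : W, ‖φ‖ ≤ 1 → ∀ k,
      ‖fderiv ℝ (fderiv ℝ F) (v k + τ • φ)‖ ≤ C₀ / (1 - |τ| * a₀) ^ 2) :
    Tendsto (fun k => ‖fderiv ℝ F (v k)‖) atTop (𝓝 0) := by
  obtain ⟨ρ, hρdef⟩ : ∃ ρ : ℝ, ρ = min (τ₀ / 2) (1 / (2 * a₀)) := ⟨_, rfl⟩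
  have hρ : 0 < ρ := hρdef ▸ lt_min (by linarith) (by positivity)
  have hρ1 : ρ ≤ τ₀ / 2 := hρdef ▸ min_le_left _ _
  have hρ2 : ρ ≤ 1 / (2 * a₀) := hρdef ▸ min_le_right _ _
  obtain ⟨M, hMdef⟩ : ∃ M : ℝ, M = 4 * C₀ := ⟨_, rfl⟩
  have hM : 0 < M := by rw [hMdef]; positivity
  -- decompose points of the closed ball
  have hdecomp : ∀ k, ∀ y ∈ Metric.closedBall (v k) ρ,
      ∃ τ : ℝ, ∃ φ : W, |τ| < τ₀ ∧ |τ| = ‖y - v k‖ ∧ ‖φ‖ ≤ 1 ∧ y = v k + τ • φ := by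
    intro k y hy
    have hdist : ‖y - v k‖ ≤ ρ := by
      simpa [dist_eq_norm] using Metric.mem_closedBall.1 hy
    refine ⟨‖y - v k‖, ‖y - v k‖⁻¹ • (y - v k), ?_, by simp, ?_, ?_⟩
    · rw [abs_norm]
      exact lt_of_le_of_lt (hdist.trans hρ1) (by linarith)
    · rcases eq_or_ne (y - v k) 0 with h0 | h0
      · simp [h0]
      · rw [norm_smul, norm_inv, norm_norm,
          inv_mul_cancel₀ (norm_ne_zero_iff.2 h0)]
    · rcases eq_or_ne (y - v k) 0 with h0 | h0
      · have : y = v k := by rwa [sub_eq_zero] at h0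
        simp [this, h0]
      · rw [smul_smul, mul_inv_cancel₀ (norm_ne_zero_iff.2 h0), one_smul]
        abel
  -- the closed ball lies in V
  have hball : ∀ k, Metric.closedBall (v k) ρ ⊆ V := by
    intro k y hy
    obtain ⟨τ, φ, hτ, -, hφ, rfl⟩ := hdecomp k y hy
    exact hmem τ hτ φ hφ k
  -- second derivative bound on the closed ball
  have hbd' : ∀ k, ∀ y ∈ Metric.closedBall (v k) ρ, ‖fderiv ℝ (fderiv ℝ F) y‖ ≤ M := by
    intro k y hy
    obtain ⟨τ, φ, hτ, hτn, hφ, rfl⟩ := hdecomp k y hy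
    refine (hbd τ hτ φ hφ k).trans ?_
    have hdist : ‖v k + τ • φ - v k‖ ≤ ρ := by
      simpa [dist_eq_norm] using Metric.mem_closedBall.1 hy
    have hτρ : |τ| ≤ ρ := by rw [hτn]; exact hdist
    have h1 : |τ| * a₀ ≤ 1 / 2 := by
      have : |τ| ≤ 1 / (2 * a₀) := hτρ.trans hρ2
      calc |τ| * a₀ ≤ (1 / (2 * a₀)) * a₀ := by nlinarith [abs_nonneg τ]
      _ = 1 / 2 := by field_simp
    have h2 : (1/2:ℝ) ≤ 1 - |τ| * a₀ := by linarith
    have h3 : ((1:ℝ)/2) ^ 2 ≤ (1 - |τ| * a₀) ^ 2 := by nlinarith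
    calc C₀ / (1 - |τ| * a₀) ^ 2 ≤ C₀ / ((1:ℝ)/2) ^ 2 :=
          div_le_div_of_nonneg_left hC₀.le (by norm_num) h3
    _ = M := by rw [hMdef]; ring
  -- differentiability facts
  have hdiff : ∀ x ∈ V, DifferentiableAt ℝ F x := fun x hx =>
    (hF.contDiffAt (hV.mem_nhds hx)).differentiableAt two_ne_zero
  have hdiff' : ∀ x ∈ V, DifferentiableAt ℝ (fderiv ℝ F) x := fun x hx =>
    ((hF.contDiffAt (hV.mem_nhds hx)).fderiv_right (m := 1) (by norm_num)).differentiableAt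
      one_ne_zero
  -- Lipschitz bound for fderiv F on the closed ball
  have hlip : ∀ k, ∀ y ∈ Metric.closedBall (v k) ρ,
      ‖fderiv ℝ F y - fderiv ℝ F (v k)‖ ≤ M * ‖y - v k‖ := by
    intro k y hy
    exact (convex_closedBall (v k) ρ).norm_image_sub_le_of_norm_fderiv_le
      (fun x hx => hdiff' x (hball k hx)) (fun x hx => hbd' k x hx)
      (Metric.mem_closedBall_self hρ.le) hy
  -- Taylor-type inequality
  have htaylor : ∀ k, ∀ h : W, ‖h‖ ≤ ρ →
      |F (v k + h) - F (v k) - fderiv ℝ F (v k) h| ≤ M * ‖h‖ ^ 2 := by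
    intro k h hh
    set L : W →L[ℝ] ℝ := fderiv ℝ F (v k) with hL
    set G : W → ℝ := fun z => F (v k + z) - L z with hG
    have hmemball : ∀ z ∈ Metric.closedBall (0:W) ‖h‖,
        v k + z ∈ Metric.closedBall (v k) ρ := by
      intro z hz
      have : ‖z‖ ≤ ‖h‖ := by simpa using Metric.mem_closedBall.1 hz
      simp only [Metric.mem_closedBall, dist_eq_norm, add_sub_cancel_left]
      linarith
    have hder : ∀ z ∈ Metric.closedBall (0:W) ‖h‖,
        HasFDerivWithinAt G (fderiv ℝ F (v k + z) - L) (Metric.closedBall (0:W) ‖h‖) z := by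
      intro z hz
      have h1 : HasFDerivAt F (fderiv ℝ F (v k + z)) (v k + z) :=
        (hdiff _ (hball k (hmemball z hz))).hasFDerivAt
      have h2 : HasFDerivAt (fun z : W => v k + z) (ContinuousLinearMap.id ℝ W) z := by
        simpa using (hasFDerivAt_id z).const_add (v k)
      have h3 : HasFDerivAt (fun z : W => F (v k + z))
          ((fderiv ℝ F (v k + z)).comp (ContinuousLinearMap.id ℝ W)) z := h1.comp z h2
      rw [ContinuousLinearMap.comp_id] at h3
      exact (h3.sub (L.hasFDerivAt)).hasFDerivWithinAt
    have hbound : ∀ z ∈ Metric.closedBall (0:W) ‖h‖,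
        ‖fderiv ℝ F (v k + z) - L‖ ≤ M * ‖h‖ := by
      intro z hz
      have hz' : ‖z‖ ≤ ‖h‖ := by simpa using Metric.mem_closedBall.1 hz
      calc ‖fderiv ℝ F (v k + z) - L‖ ≤ M * ‖v k + z - v k‖ :=
            hlip k _ (hmemball z hz)
      _ = M * ‖z‖ := by rw [add_sub_cancel_left]
      _ ≤ M * ‖h‖ := by nlinarith
    have hhmem : h ∈ Metric.closedBall (0:W) ‖h‖ := by
      simp [Metric.mem_closedBall, dist_eq_norm]
    have key := (convex_closedBall (0:W) ‖h‖).norm_image_sub_le_of_norm_hasFDerivWithin_le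
      hder hbound (Metric.mem_closedBall_self (norm_nonneg h)) hhmem
    have hG0 : G 0 = F (v k) := by simp [hG]
    have : ‖G h - G 0‖ ≤ M * ‖h‖ * ‖h - 0‖ := key
    rw [hG0, sub_zero] at this
    calc |F (v k + h) - F (v k) - L h| = ‖G h - F (v k)‖ := by
          rw [hG]; congr 1; ring
    _ ≤ M * ‖h‖ * ‖h‖ := this
    _ = M * ‖h‖ ^ 2 := by ring
  -- conclusion
  rw [Metric.tendsto_atTop]
  intro ε hε
  obtain ⟨t, htdef⟩ : ∃ t : ℝ, t = min ρ (ε / (4 * M)) := ⟨_, rfl⟩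
  have ht : 0 < t := htdef ▸ lt_min hρ (by positivity)
  have htρ : t ≤ ρ := htdef ▸ min_le_left _ _
  have htε : M * t ≤ ε / 4 := by
    have h4 : t ≤ ε / (4 * M) := htdef ▸ min_le_right _ _
    calc M * t ≤ M * (ε / (4 * M)) := mul_le_mul_of_nonneg_left h4 hM.le
    _ = ε / 4 := by field_simp
  obtain ⟨δ, hδdef⟩ : ∃ δ : ℝ, δ = t * ε / 4 := ⟨_, rfl⟩
  have hδ : 0 < δ := by rw [hδdef]; positivity
  obtain ⟨N, hN⟩ := (Metric.tendsto_atTop.1 hmin) δ hδ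
  refine ⟨N, fun k hk => ?_⟩
  have hFk : F (v k) - Fhat < δ := by
    have := hN k hk
    rw [Real.dist_eq] at this
    exact lt_of_le_of_lt (le_abs_self _) this
  -- bound the derivative
  have hkey : ‖fderiv ℝ F (v k)‖ ≤ δ / t + M * t := by
    refine opnorm_le_of_unit _ _ (by positivity) fun φ hφ => ?_
    have hτlt : |(-t)| < τ₀ := by
      rw [abs_neg, abs_of_pos ht]
      exact lt_of_le_of_lt (htρ.trans hρ1) (by linarith)
    have hnh : ‖(-t) • φ‖ ≤ ρ := by
      rw [norm_smul, norm_neg, Real.norm_eq_abs, abs_of_pos ht]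
      nlinarith
    have hT := htaylor k ((-t) • φ) hnh
    have hlow : Fhat ≤ F (v k + (-t) • φ) :=
      hglb.1 ⟨v k + (-t) • φ, hmem (-t) hτlt φ hφ k, rfl⟩
    have hlin : fderiv ℝ F (v k) ((-t) • φ) = -t * fderiv ℝ F (v k) φ := by
      rw [map_smul]; rfl
    have hnh2 : ‖(-t) • φ‖ ^ 2 ≤ t ^ 2 := by
      rw [norm_smul, norm_neg, Real.norm_eq_abs, abs_of_pos ht, mul_pow]
      have hφ2 : ‖φ‖ ^ 2 ≤ 1 := by nlinarith [norm_nonneg φ]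
      nlinarith [sq_nonneg t]
    have h1 : F (v k + (-t) • φ) - F (v k) - (-t * fderiv ℝ F (v k) φ) ≤ M * t ^ 2 := by
      have h1a := (abs_le.1 hT).2
      rw [hlin] at h1a
      have h1b : M * ‖(-t) • φ‖ ^ 2 ≤ M * t ^ 2 := mul_le_mul_of_nonneg_left hnh2 hM.le
      linarith
    have h2 : t * fderiv ℝ F (v k) φ ≤ δ + M * t ^ 2 := by linarith
    have : fderiv ℝ F (v k) φ ≤ (δ + M * t ^ 2) / t := by
      rw [le_div_iff₀ ht]; linarith [mul_comm (fderiv ℝ F (v k) φ) t]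
    calc fderiv ℝ F (v k) φ ≤ (δ + M * t ^ 2) / t := this
    _ = δ / t + M * t := by field_simp
  have hδt : δ / t = ε / 4 := by rw [hδdef]; field_simp
  rw [Real.dist_eq, sub_zero, abs_of_nonneg (norm_nonneg _)]
  calc ‖fderiv ℝ F (v k)‖ ≤ δ / t + M * t := hkey
  _ ≤ ε / 4 + ε / 4 := by rw [hδt]; linarith
  _ < ε := by linarith
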